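/- arXiv:1212.1129 — 4 statements merged into one kernel-verified Lean document; each statement's English description precedes it below -/
import Mathlib

section
/- For 0 < m ≤ 2 with m ≠ 1, the function θ_m(r,s) = ((m-1)/m) · (r^m - s^m)/(r^{m-1} - s^{m-1}) (defined for r,s > 0, r ≠ s) admits the integral representation θ_m(r,s) = ∫₀¹ ((1-α) r^{m-1} + α s^{m-1})^{1/(m-1)} dα. -/
open Real

theorem theta_m_integral_representation
    (m : ℝ) (hm0 : 0 < m) (hm2 : m ≤ 2) (hm1 : m ≠ 1)
    (r s : ℝ) (hr : 0 < r) (hs : 0 < s) (hrs : r ≠ s) :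
    ((m - 1) / m) * (r ^ m - s ^ m) / (r ^ (m - 1) - s ^ (m - 1)) =
      ∫ α in (0:ℝ)..1, ((1 - α) * r ^ (m - 1) + α * s ^ (m - 1)) ^ (1 / (m - 1)) := by
  set a := r ^ (m - 1) with ha_def
  set b := s ^ (m - 1) with hb_def
  have hm1' : m - 1 ≠ 0 := sub_ne_zero.2 hm1
  have hm0' : m ≠ 0 := ne_of_gt hm0
  have ha : 0 < a := rpow_pos_of_pos hr _
  have hb : 0 < b := rpow_pos_of_pos hs _
  have hkey : ∀ x : ℝ, 0 < x → (x ^ (m - 1)) ^ (1 / (m - 1)) = x := by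
    intro x hx
    rw [← rpow_mul hx.le, mul_one_div, div_self hm1', rpow_one]
  have hab : a ≠ b := fun h => hrs (by
    have h1 := hkey r hr
    have h2 := hkey s hs
    rw [← ha_def] at h1; rw [← hb_def] at h2
    rw [← h1, ← h2, h])
  have hc : b - a ≠ 0 := sub_ne_zero.2 (Ne.symm hab)
  set q : ℝ := m / (m - 1) with hq_def
  have hq : q ≠ 0 := div_ne_zero hm0' hm1'
  -- positivity of the convex combination on [0,1]
  have hg : ∀ α ∈ Set.uIcc (0:ℝ) 1, 0 < (1 - α) * a + α * b := by
    intro α hα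
    rw [Set.uIcc_of_le zero_le_one] at hα
    obtain ⟨h0, h1⟩ := hα
    rcases eq_or_lt_of_le h0 with h | h
    · simp [← h, ha]
    · nlinarith [mul_pos h hb, mul_nonneg (sub_nonneg.2 h1) ha.le]
  -- the antiderivative
  set F : ℝ → ℝ := fun α => ((1 - α) * a + α * b) ^ q / (q * (b - a)) with hF_def
  have hderiv : ∀ α ∈ Set.uIcc (0:ℝ) 1,
      HasDerivAt F (((1 - α) * a + α * b) ^ (1 / (m - 1))) α := by
    intro α hα
    have hgα := hg α hα
    have hlin : HasDerivAt (fun α : ℝ => (1 - α) * a + α * b) (b - a) α := by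
      have h1 : HasDerivAt (fun α : ℝ => (1 - α) * a + α * b) ((-1) * a + 1 * b) α :=
        (((hasDerivAt_id α).const_sub 1).mul_const a).add ((hasDerivAt_id α).mul_const b)
      convert h1 using 1; ring
    have h2 : HasDerivAt (fun α : ℝ => ((1 - α) * a + α * b) ^ q)
        ((b - a) * q * ((1 - α) * a + α * b) ^ (q - 1)) α :=
      hlin.rpow_const (Or.inl (ne_of_gt hgα))
    have h3 := h2.div_const (q * (b - a))
    refine h3.congr_deriv ?_
    have hq1 : q - 1 = 1 / (m - 1) := by
      rw [hq_def]; field_simp; ring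
    rw [hq1]
    field_simp
  -- continuity of the integrand
  have hcont : IntervalIntegrable
      (fun α => ((1 - α) * a + α * b) ^ (1 / (m - 1))) MeasureTheory.volume 0 1 := by
    apply ContinuousOn.intervalIntegrable
    apply ContinuousOn.rpow_const
    · fun_prop
    · intro x hx
      exact Or.inl (ne_of_gt (hg x hx))
  have hint := intervalIntegral.integral_eq_sub_of_hasDerivAt
    (fun α hα => hderiv α hα) hcont
  rw [hint]
  have hFa : F 0 = a ^ q / (q * (b - a)) := by simp [hF_def]
  have hFb : F 1 = b ^ q / (q * (b - a)) := by simp [hF_def]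
  have haq : a ^ q = r ^ m := by
    rw [ha_def, hq_def, ← rpow_mul hr.le, div_eq_inv_mul, ← mul_assoc,
      mul_inv_cancel₀ hm1', one_mul]
  have hbq : b ^ q = s ^ m := by
    rw [hb_def, hq_def, ← rpow_mul hs.le, div_eq_inv_mul, ← mul_assoc,
      mul_inv_cancel₀ hm1', one_mul]
  rw [hFa, hFb, haq, hbq, hq_def]
  have hab' : a - b ≠ 0 := sub_ne_zero.2 hab
  field_simp
  ring
end

section
/- For 0 < m ≤ 2 with m ≠ 1, the function θ_m(r,s) = ((m-1)/m)(r^m - s^m)/(r^{m-1} - s^{m-1}) is jointly concave on (0,∞) × (0,∞). -/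
open Real Set

/-- Bernoulli-type tangent-line inequality for `rpow` with exponent `q ∈ (-1, 1] \ {0}`. -/
lemma theta_key (q t : ℝ) (hq0 : -1 < q) (hq1 : q ≤ 1) (hq : q ≠ 0) (ht : 0 < t) :
    (t ^ q - 1) / q ≤ t - 1 := by
  rcases lt_or_gt_of_ne hq with hqneg | hqpos
  · have amgm := Real.geom_mean_le_arith_mean2_weighted
      (by linarith : (0:ℝ) ≤ -q) (by linarith : (0:ℝ) ≤ 1 - -q) ht.le zero_le_one (by ring)
    rw [Real.one_rpow, mul_one, mul_one] at amgm
    set D := -q * t + (1 - -q) with hD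
    have htr : 0 < t ^ (-q) := Real.rpow_pos_of_pos ht _
    have hDpos : 0 < D := lt_of_lt_of_le htr amgm
    have hinv : t ^ q = (t ^ (-q))⁻¹ := by
      rw [← Real.rpow_neg ht.le, neg_neg]
    have h1 : D⁻¹ ≤ (t ^ (-q))⁻¹ := inv_anti₀ htr amgm
    have h2 : 2 - D ≤ D⁻¹ := by
      rw [inv_eq_one_div, le_div_iff₀ hDpos]
      nlinarith [sq_nonneg (D - 1)]
    rw [div_le_iff_of_neg hqneg]
    linarith
  · have amgm := Real.geom_mean_le_arith_mean2_weighted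
      hqpos.le (by linarith : (0:ℝ) ≤ 1 - q) ht.le zero_le_one (by ring)
    rw [Real.one_rpow, mul_one, mul_one] at amgm
    rw [div_le_iff₀ hqpos]
    linarith

lemma theta_onevar (q : ℝ) (hq0 : -1 < q) (hq1 : q ≤ 1) (hq : q ≠ 0) (x x0 T E : ℝ)
    (hx : 0 < x) (hx0 : 0 < x0) (hT : 0 < T) (hE : 0 < E) (hTq : T ^ q = E) :
    (x ^ q / E - x0 ^ q) * (T / q) ≤ x0 ^ (q - 1) * x - T * x0 ^ q := by
  have ht : 0 < x / (T * x0) := div_pos hx (mul_pos hT hx0)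
  have k := theta_key q _ hq0 hq1 hq ht
  have htq : (x / (T * x0)) ^ q = x ^ q / (E * x0 ^ q) := by
    rw [Real.div_rpow hx.le (mul_pos hT hx0).le, Real.mul_rpow hT.le hx0.le, hTq]
  have hA : (0:ℝ) < x0 ^ q := Real.rpow_pos_of_pos hx0 q
  have hA' : x0 ^ (q - 1) * x0 = x0 ^ q := by
    rw [← Real.rpow_add_one hx0.ne' (q - 1)]; norm_num
  rw [htq] at k
  have k2 := mul_le_mul_of_nonneg_left k (mul_pos hA hT).le
  calc (x ^ q / E - x0 ^ q) * (T / q)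
      = x0 ^ q * T * ((x ^ q / (E * x0 ^ q) - 1) / q) := by
        field_simp
    _ ≤ x0 ^ q * T * (x / (T * x0) - 1) := k2
    _ = x0 ^ (q - 1) * x - T * x0 ^ q := by
        rw [← hA']; field_simp

lemma theta_combo_pos {α β u v : ℝ} (hα : 0 ≤ α) (hβ : 0 ≤ β) (hαβ : α + β = 1)
    (hu : 0 < u) (hv : 0 < v) : 0 < α * u + β * v := by
  rcases hα.lt_or_eq with h | h
  · have := mul_pos h hu
    nlinarith [mul_nonneg hβ hv.le]
  · have hβ1 : β = 1 := by linarith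
    rw [← h, hβ1]; simpa using hv

/-- Reverse Hölder-type tangent inequality for the weighted power mean. -/
lemma theta_star (q : ℝ) (hq0 : -1 < q) (hq1 : q ≤ 1) (hq : q ≠ 0)
    {α β : ℝ} (hα : 0 ≤ α) (hβ : 0 ≤ β) (hαβ : α + β = 1)
    {x y x0 y0 : ℝ} (hx : 0 < x) (hy : 0 < y) (hx0 : 0 < x0) (hy0 : 0 < y0)
    (hnorm : α * x0 ^ q + β * y0 ^ q = 1) :
    (α * x ^ q + β * y ^ q) ^ (1 / q) ≤ α * (x0 ^ (q - 1) * x) + β * (y0 ^ (q - 1) * y) := by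
  have hE : 0 < α * x ^ q + β * y ^ q :=
    theta_combo_pos hα hβ hαβ (Real.rpow_pos_of_pos hx q) (Real.rpow_pos_of_pos hy q)
  set E := α * x ^ q + β * y ^ q with hEdef
  set T := E ^ (1 / q) with hTdef
  have hT : 0 < T := Real.rpow_pos_of_pos hE _
  have hTq : T ^ q = E := by
    rw [hTdef, ← Real.rpow_mul hE.le, one_div_mul_cancel hq, Real.rpow_one]
  have h1 := theta_onevar q hq0 hq1 hq x x0 T E hx hx0 hT hE hTq
  have h2 := theta_onevar q hq0 hq1 hq y y0 T E hy hy0 hT hE hTq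
  have hsum : α * ((x ^ q / E - x0 ^ q) * (T / q)) + β * ((y ^ q / E - y0 ^ q) * (T / q)) = 0 := by
    have hEq : α * (x ^ q / E) + β * (y ^ q / E) = 1 := by
      field_simp
      exact hEdef.symm
    linear_combination (T / q) * hEq - (T / q) * hnorm
  have hfin : 0 ≤ (α * (x0 ^ (q - 1) * x) + β * (y0 ^ (q - 1) * y)) - T := by
    have g1 := mul_le_mul_of_nonneg_left h1 hα
    have g2 := mul_le_mul_of_nonneg_left h2 hβ
    have := add_le_add g1 g2
    rw [hsum] at this
    nlinarith [this, hnorm]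
  linarith

/-- The weighted power mean with exponent `q ∈ (-1, 1] \ {0}` is jointly concave. -/
lemma theta_concaveF (q : ℝ) (hq0 : -1 < q) (hq1 : q ≤ 1) (hq : q ≠ 0)
    {α β : ℝ} (hα : 0 ≤ α) (hβ : 0 ≤ β) (hαβ : α + β = 1) :
    ConcaveOn ℝ (Ioi (0:ℝ) ×ˢ Ioi (0:ℝ))
      (fun p : ℝ × ℝ => (α * p.1 ^ q + β * p.2 ^ q) ^ (1 / q)) := by
  refine ⟨(convex_Ioi 0).prod (convex_Ioi 0), ?_⟩
  rintro ⟨x1, y1⟩ ⟨hx1, hy1⟩ ⟨x2, y2⟩ ⟨hx2, hy2⟩ a b ha hb hab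
  simp only [mem_Ioi] at hx1 hy1 hx2 hy2
  simp only [Prod.smul_mk, Prod.mk_add_mk, smul_eq_mul]
  set X := a * x1 + b * x2 with hXdef
  set Y := a * y1 + b * y2 with hYdef
  have hX : 0 < X := theta_combo_pos ha hb hab hx1 hx2
  have hY : 0 < Y := theta_combo_pos ha hb hab hy1 hy2
  have hE : 0 < α * X ^ q + β * Y ^ q :=
    theta_combo_pos hα hβ hαβ (Real.rpow_pos_of_pos hX q) (Real.rpow_pos_of_pos hY q)
  set E := α * X ^ q + β * Y ^ q with hEdef
  set T := E ^ (1 / q) with hTdef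
  have hT : 0 < T := Real.rpow_pos_of_pos hE _
  have hTq : T ^ q = E := by
    rw [hTdef, ← Real.rpow_mul hE.le, one_div_mul_cancel hq, Real.rpow_one]
  set x0 := X / T with hx0def
  set y0 := Y / T with hy0def
  have hx0 : 0 < x0 := div_pos hX hT
  have hy0 : 0 < y0 := div_pos hY hT
  have hx0q : x0 ^ q = X ^ q / E := by rw [hx0def, Real.div_rpow hX.le hT.le, hTq]
  have hy0q : y0 ^ q = Y ^ q / E := by rw [hy0def, Real.div_rpow hY.le hT.le, hTq]
  have hnorm : α * x0 ^ q + β * y0 ^ q = 1 := by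
    rw [hx0q, hy0q]; field_simp; exact hEdef.symm
  have s1 := theta_star q hq0 hq1 hq hα hβ hαβ hx1 hy1 hx0 hy0 hnorm
  have s2 := theta_star q hq0 hq1 hq hα hβ hαβ hx2 hy2 hx0 hy0 hnorm
  have hx0T : x0 * T = X := by rw [hx0def]; field_simp
  have hy0T : y0 * T = Y := by rw [hy0def]; field_simp
  have hA' : x0 ^ (q - 1) * x0 = x0 ^ q := by
    rw [← Real.rpow_add_one hx0.ne' (q - 1)]; norm_num
  have hB' : y0 ^ (q - 1) * y0 = y0 ^ q := by
    rw [← Real.rpow_add_one hy0.ne' (q - 1)]; norm_num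
  have key2 : α * (x0 ^ (q - 1) * X) + β * (y0 ^ (q - 1) * Y) = T := by
    calc α * (x0 ^ (q - 1) * X) + β * (y0 ^ (q - 1) * Y)
        = (α * (x0 ^ (q - 1) * x0) + β * (y0 ^ (q - 1) * y0)) * T := by
          rw [← hx0T, ← hy0T]; ring
      _ = T := by rw [hA', hB', hnorm, one_mul]
  calc a • (α * x1 ^ q + β * y1 ^ q) ^ (1 / q) + b • (α * x2 ^ q + β * y2 ^ q) ^ (1 / q)
      ≤ a * (α * (x0 ^ (q - 1) * x1) + β * (y0 ^ (q - 1) * y1))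
        + b * (α * (x0 ^ (q - 1) * x2) + β * (y0 ^ (q - 1) * y2)) := by
        simp only [smul_eq_mul]
        exact add_le_add (mul_le_mul_of_nonneg_left s1 ha) (mul_le_mul_of_nonneg_left s2 hb)
    _ = α * (x0 ^ (q - 1) * X) + β * (y0 ^ (q - 1) * Y) := by rw [hXdef, hYdef]; ring
    _ = T := key2

/-- Integral representation of `θ_m` as an average of power means. -/
lemma theta_rep (m : ℝ) (hm0 : 0 < m) (hm1 : m ≠ 1) {r s : ℝ} (hr : 0 < r) (hs : 0 < s) :
    (if r = s then r else (m - 1) / m * (r ^ m - s ^ m) / (r ^ (m - 1) - s ^ (m - 1)))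
      = ∫ t in (0:ℝ)..1, ((1 - t) * r ^ (m - 1) + t * s ^ (m - 1)) ^ (1 / (m - 1)) := by
  set q := m - 1 with hqdef
  have hq : q ≠ 0 := sub_ne_zero.2 hm1
  have hA : 0 < r ^ q := Real.rpow_pos_of_pos hr q
  have hB : 0 < s ^ q := Real.rpow_pos_of_pos hs q
  have root : ∀ {x : ℝ}, 0 < x → (x ^ q) ^ (1 / q) = x := by
    intro x hx
    rw [← Real.rpow_mul hx.le, mul_one_div_cancel hq, Real.rpow_one]
  by_cases hrs : r = s
  · subst hrs
    rw [if_pos rfl]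
    have : ∀ t : ℝ, (1 - t) * r ^ q + t * r ^ q = r ^ q := fun t => by ring
    simp_rw [this]
    rw [intervalIntegral.integral_const, root hr]
    simp
  · rw [if_neg hrs]
    have hAB : r ^ q ≠ s ^ q := by
      intro h
      exact hrs (by rw [← root hr, h, root hs])
    have hBA : s ^ q - r ^ q ≠ 0 := sub_ne_zero.2 (Ne.symm hAB)
    set A := r ^ q
    set B := s ^ q
    set c := q / (m * (B - A)) with hcdef
    have hgpos : ∀ t ∈ uIcc (0:ℝ) 1, 0 < (1 - t) * A + t * B := by
      intro t ht
      rw [uIcc_of_le zero_le_one, mem_Icc] at ht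
      exact theta_combo_pos (by linarith [ht.2]) ht.1 (by ring) hA hB
    have hderiv : ∀ t ∈ uIcc (0:ℝ) 1,
        HasDerivAt (fun t => c * ((1 - t) * A + t * B) ^ (m / q))
          (((1 - t) * A + t * B) ^ (1 / q)) t := by
      intro t ht
      have hg : HasDerivAt (fun t : ℝ => (1 - t) * A + t * B) (B - A) t := by
        have h1 : HasDerivAt (fun t : ℝ => (1 - t) * A) (-1 * A) t :=
          (HasDerivAt.const_sub 1 (hasDerivAt_id' t)).mul_const A
        have h2 : HasDerivAt (fun t : ℝ => t * B) (1 * B) t :=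
          (hasDerivAt_id' t).mul_const B
        rw [show B - A = -1 * A + 1 * B by ring]
        exact h1.add h2
      have hpos := hgpos t ht
      have hd := (hg.rpow_const (p := m / q) (Or.inl hpos.ne')).const_mul c
      have hexp : m / q - 1 = 1 / q := by
        rw [hqdef]; field_simp; ring
      rw [hexp] at hd
      refine hd.congr_deriv ?_
      rw [hcdef]
      field_simp [sub_ne_zero.2 (Ne.symm hAB)]
    have hint : IntervalIntegrable (fun t => ((1 - t) * A + t * B) ^ (1 / q))
        MeasureTheory.volume 0 1 := by
      apply ContinuousOn.intervalIntegrable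
      apply ContinuousOn.rpow_const
      · exact (((continuous_const.sub continuous_id).mul continuous_const).add
          (continuous_id.mul continuous_const)).continuousOn
      · exact fun t ht => Or.inl (hgpos t ht).ne'
    rw [intervalIntegral.integral_eq_sub_of_hasDerivAt hderiv hint]
    have e1 : (1 - (1:ℝ)) * A + 1 * B = B := by ring
    have e0 : (1 - (0:ℝ)) * A + 0 * B = A := by ring
    rw [e1, e0]
    have hBm : B ^ (m / q) = s ^ m := by
      rw [← Real.rpow_mul hs.le]; congr 1; field_simp
    have hAm : A ^ (m / q) = r ^ m := by
      rw [← Real.rpow_mul hr.le]; congr 1; field_simp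
    rw [hBm, hAm, hcdef]
    have hABne : A - B ≠ 0 := sub_ne_zero.2 hAB
    field_simp
    ring

lemma theta_integ (q : ℝ) {r s : ℝ} (hr : 0 < r) (hs : 0 < s) :
    IntervalIntegrable (fun t => ((1 - t) * r ^ q + t * s ^ q) ^ (1 / q))
      MeasureTheory.volume 0 1 := by
  have hA : 0 < r ^ q := Real.rpow_pos_of_pos hr q
  have hB : 0 < s ^ q := Real.rpow_pos_of_pos hs q
  apply ContinuousOn.intervalIntegrable
  apply ContinuousOn.rpow_const
  · exact (((continuous_const.sub continuous_id).mul continuous_const).add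
      (continuous_id.mul continuous_const)).continuousOn
  · intro t ht
    rw [uIcc_of_le zero_le_one, mem_Icc] at ht
    exact Or.inl (theta_combo_pos (by linarith [ht.2]) ht.1 (by ring) hA hB).ne'

theorem theta_m_concave
    (m : ℝ) (hm0 : 0 < m) (hm2 : m ≤ 2) (hm1 : m ≠ 1) :
    ConcaveOn ℝ (Ioi (0:ℝ) ×ˢ Ioi (0:ℝ))
      (fun p : ℝ × ℝ =>
        if p.1 = p.2 then p.1
        else ((m - 1) / m) * (p.1 ^ m - p.2 ^ m) / (p.1 ^ (m - 1) - p.2 ^ (m - 1))) := by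
  have hq0 : -1 < m - 1 := by linarith
  have hq1 : m - 1 ≤ 1 := by linarith
  have hq : m - 1 ≠ 0 := sub_ne_zero.2 hm1
  refine ⟨(convex_Ioi 0).prod (convex_Ioi 0), ?_⟩
  rintro ⟨x1, y1⟩ hp ⟨x2, y2⟩ hp' a b ha hb hab
  obtain ⟨hx1, hy1⟩ := hp
  obtain ⟨hx2, hy2⟩ := hp'
  simp only [mem_Ioi] at hx1 hy1 hx2 hy2
  simp only [Prod.smul_mk, Prod.mk_add_mk, smul_eq_mul]
  have hX : 0 < a * x1 + b * x2 := theta_combo_pos ha hb hab hx1 hx2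
  have hY : 0 < a * y1 + b * y2 := theta_combo_pos ha hb hab hy1 hy2
  rw [theta_rep m hm0 hm1 hx1 hy1, theta_rep m hm0 hm1 hx2 hy2, theta_rep m hm0 hm1 hX hY]
  have I1 := theta_integ (m - 1) hx1 hy1
  have I2 := theta_integ (m - 1) hx2 hy2
  have I3 := theta_integ (m - 1) hX hY
  calc a * (∫ t in (0:ℝ)..1, ((1 - t) * x1 ^ (m - 1) + t * y1 ^ (m - 1)) ^ (1 / (m - 1)))
        + b * (∫ t in (0:ℝ)..1, ((1 - t) * x2 ^ (m - 1) + t * y2 ^ (m - 1)) ^ (1 / (m - 1)))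
      = ∫ t in (0:ℝ)..1,
          (a * ((1 - t) * x1 ^ (m - 1) + t * y1 ^ (m - 1)) ^ (1 / (m - 1))
           + b * ((1 - t) * x2 ^ (m - 1) + t * y2 ^ (m - 1)) ^ (1 / (m - 1))) := by
        rw [intervalIntegral.integral_add (I1.const_mul a) (I2.const_mul b),
          intervalIntegral.integral_const_mul, intervalIntegral.integral_const_mul]
    _ ≤ ∫ t in (0:ℝ)..1,
          ((1 - t) * (a * x1 + b * x2) ^ (m - 1)
            + t * (a * y1 + b * y2) ^ (m - 1)) ^ (1 / (m - 1)) := by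
        apply intervalIntegral.integral_mono_on zero_le_one
          ((I1.const_mul a).add (I2.const_mul b)) I3
        intro t ht
        rw [mem_Icc] at ht
        have hc := (theta_concaveF (m - 1) hq0 hq1 hq (by linarith [ht.2] : (0:ℝ) ≤ 1 - t)
          ht.1 (by ring)).2
          (Set.mk_mem_prod (mem_Ioi.2 hx1) (mem_Ioi.2 hy1))
          (Set.mk_mem_prod (mem_Ioi.2 hx2) (mem_Ioi.2 hy2)) ha hb hab
        simpa only [Prod.smul_mk, Prod.mk_add_mk, smul_eq_mul] using hc
end

section
/- For 0 < m < m' ≤ 2 (both ≠ 1), and all s, t > 0, we have θ_m(s,t) ≤ θ_{m'}(s,t), where θ_p(s,t) = ∫₀¹ ((1-α)s^{p-1} + α t^{p-1})^{1/(p-1)} dα. -/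
open Real

-- positivity of a convex combination
private lemma comb_pos {w1 w2 a b : ℝ} (hw1 : 0 ≤ w1) (hw2 : 0 ≤ w2) (hw : w1 + w2 = 1)
    (ha : 0 < a) (hb : 0 < b) : 0 < w1 * a + w2 * b := by
  rcases hw1.lt_or_eq with h | h
  · exact add_pos_of_pos_of_nonneg (mul_pos h ha) (mul_nonneg hw2 hb.le)
  · have hw2' : w2 = 1 := by linarith
    rw [← h, hw2']; simpa using hb

-- power mean is monotone, positive exponents
private lemma pow_mean_le_pos {w1 w2 : ℝ} (hw1 : 0 ≤ w1) (hw2 : 0 ≤ w2) (hw : w1 + w2 = 1)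
    {s t : ℝ} (hs : 0 < s) (ht : 0 < t) {r r' : ℝ} (hr : 0 < r) (hrr : r ≤ r') :
    (w1 * s ^ r + w2 * t ^ r) ^ (1 / r) ≤ (w1 * s ^ r' + w2 * t ^ r') ^ (1 / r') := by
  have hr' : 0 < r' := lt_of_lt_of_le hr hrr
  set p := r' / r with hp
  have hp1 : 1 ≤ p := (one_le_div hr).2 hrr
  have hc := (convexOn_rpow hp1).2 (Set.mem_Ici.2 (rpow_nonneg hs.le r))
      (Set.mem_Ici.2 (rpow_nonneg ht.le r)) hw1 hw2 hw
  simp only [smul_eq_mul] at hc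
  have hsp : (s ^ r) ^ p = s ^ r' := by
    rw [← Real.rpow_mul hs.le]
    congr 1; rw [hp]; field_simp [hr.ne']
  have htp : (t ^ r) ^ p = t ^ r' := by
    rw [← Real.rpow_mul ht.le]
    congr 1; rw [hp]; field_simp [hr.ne']
  rw [hsp, htp] at hc
  have hX : 0 < w1 * s ^ r + w2 * t ^ r :=
    comb_pos hw1 hw2 hw (rpow_pos_of_pos hs r) (rpow_pos_of_pos ht r)
  have h2 : ((w1 * s ^ r + w2 * t ^ r) ^ p) ^ (1 / r') ≤
      (w1 * s ^ r' + w2 * t ^ r') ^ (1 / r') :=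
    rpow_le_rpow (rpow_nonneg hX.le p) hc (by positivity)
  rwa [← Real.rpow_mul hX.le, show p * (1 / r') = 1 / r by field_simp [hp]; rw [hp]; field_simp [hr.ne']] at h2

-- geometric mean ≤ power mean with positive exponent
private lemma geom_le_pow_mean {w1 w2 : ℝ} (hw1 : 0 ≤ w1) (hw2 : 0 ≤ w2) (hw : w1 + w2 = 1)
    {s t : ℝ} (hs : 0 < s) (ht : 0 < t) {q : ℝ} (hq : 0 < q) :
    s ^ w1 * t ^ w2 ≤ (w1 * s ^ q + w2 * t ^ q) ^ (1 / q) := by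
  have h := Real.geom_mean_le_arith_mean2_weighted hw1 hw2
      (rpow_nonneg hs.le q) (rpow_nonneg ht.le q) hw
  have hG : 0 < s ^ w1 * t ^ w2 := mul_pos (rpow_pos_of_pos hs _) (rpow_pos_of_pos ht _)
  have hGq : (s ^ w1 * t ^ w2) ^ q = (s ^ q) ^ w1 * (t ^ q) ^ w2 := by
    rw [mul_rpow (rpow_nonneg hs.le _) (rpow_nonneg ht.le _),
      ← Real.rpow_mul hs.le, ← Real.rpow_mul ht.le,
      ← Real.rpow_mul hs.le, ← Real.rpow_mul ht.le, mul_comm w1 q, mul_comm w2 q]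
  have h2 : (s ^ w1 * t ^ w2) ^ q ≤ w1 * s ^ q + w2 * t ^ q := by rw [hGq]; exact h
  have h3 := rpow_le_rpow (rpow_nonneg hG.le q) h2 (le_of_lt (by positivity : (0:ℝ) < 1 / q))
  rwa [← Real.rpow_mul hG.le, mul_one_div, div_self hq.ne', rpow_one] at h3

-- inversion identity for negative exponent
private lemma neg_exp_inv {w1 w2 : ℝ} (hw1 : 0 ≤ w1) (hw2 : 0 ≤ w2) (hw : w1 + w2 = 1)
    {s t : ℝ} (hs : 0 < s) (ht : 0 < t) {r : ℝ} :
    (w1 * s ^ r + w2 * t ^ r) ^ (1 / r) =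
      ((w1 * s⁻¹ ^ (-r) + w2 * t⁻¹ ^ (-r)) ^ (1 / (-r)))⁻¹ := by
  have h1 : s⁻¹ ^ (-r) = s ^ r := by
    rw [Real.inv_rpow hs.le, Real.rpow_neg hs.le, inv_inv]
  have h2 : t⁻¹ ^ (-r) = t ^ r := by
    rw [Real.inv_rpow ht.le, Real.rpow_neg ht.le, inv_inv]
  have hX : 0 < w1 * s ^ r + w2 * t ^ r :=
    comb_pos hw1 hw2 hw (rpow_pos_of_pos hs r) (rpow_pos_of_pos ht r)
  rw [h1, h2, ← Real.rpow_neg hX.le]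
  congr 1
  rw [div_neg, neg_neg]

-- general power mean monotonicity
private lemma pow_mean_le {w1 w2 : ℝ} (hw1 : 0 ≤ w1) (hw2 : 0 ≤ w2) (hw : w1 + w2 = 1)
    {s t : ℝ} (hs : 0 < s) (ht : 0 < t) {r r' : ℝ} (hr : r ≠ 0) (hr' : r' ≠ 0)
    (hrr : r ≤ r') :
    (w1 * s ^ r + w2 * t ^ r) ^ (1 / r) ≤ (w1 * s ^ r' + w2 * t ^ r') ^ (1 / r') := by
  have hXpos : ∀ (u : ℝ), u ≠ 0 → 0 < w1 * s ^ u + w2 * t ^ u := fun u _ =>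
    comb_pos hw1 hw2 hw (rpow_pos_of_pos hs u) (rpow_pos_of_pos ht u)
  rcases lt_or_gt_of_ne hr with hrneg | hrpos
  · rcases lt_or_gt_of_ne hr' with hr'neg | hr'pos
    · -- both negative
      have key : (w1 * s⁻¹ ^ (-r') + w2 * t⁻¹ ^ (-r')) ^ (1 / (-r')) ≤
          (w1 * s⁻¹ ^ (-r) + w2 * t⁻¹ ^ (-r)) ^ (1 / (-r)) :=
        pow_mean_le_pos hw1 hw2 hw (inv_pos.2 hs) (inv_pos.2 ht) (by linarith) (by linarith)
      rw [neg_exp_inv hw1 hw2 hw hs ht, neg_exp_inv hw1 hw2 hw hs ht (r := r')]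
      exact inv_anti₀ (rpow_pos_of_pos (comb_pos hw1 hw2 hw
        (rpow_pos_of_pos (inv_pos.2 hs) _) (rpow_pos_of_pos (inv_pos.2 ht) _)) _) key
    · -- r < 0 < r' : go through geometric mean
      have hG1 : s⁻¹ ^ w1 * t⁻¹ ^ w2 ≤ (w1 * s⁻¹ ^ (-r) + w2 * t⁻¹ ^ (-r)) ^ (1 / (-r)) :=
        geom_le_pow_mean hw1 hw2 hw (inv_pos.2 hs) (inv_pos.2 ht) (by linarith)
      have hGinv : (s⁻¹ ^ w1 * t⁻¹ ^ w2)⁻¹ = s ^ w1 * t ^ w2 := by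
        rw [Real.inv_rpow hs.le, Real.inv_rpow ht.le, mul_inv, inv_inv, inv_inv]
      have h1 : (w1 * s ^ r + w2 * t ^ r) ^ (1 / r) ≤ s ^ w1 * t ^ w2 := by
        rw [neg_exp_inv hw1 hw2 hw hs ht, ← hGinv]
        exact inv_anti₀ (mul_pos (rpow_pos_of_pos (inv_pos.2 hs) _)
          (rpow_pos_of_pos (inv_pos.2 ht) _)) hG1
      exact h1.trans (geom_le_pow_mean hw1 hw2 hw hs ht hr'pos)
  · -- both positive
    exact pow_mean_le_pos hw1 hw2 hw hs ht hrpos hrr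

theorem theta_m_monotone_in_m
    (m m' : ℝ) (hm0 : 0 < m) (hmm' : m < m') (hm'2 : m' ≤ 2)
    (hm1 : m ≠ 1) (hm'1 : m' ≠ 1)
    (s t : ℝ) (hs : 0 < s) (ht : 0 < t) :
    (∫ α in (0:ℝ)..1, ((1 - α) * s ^ (m - 1) + α * t ^ (m - 1)) ^ (1 / (m - 1))) ≤
      ∫ α in (0:ℝ)..1, ((1 - α) * s ^ (m' - 1) + α * t ^ (m' - 1)) ^ (1 / (m' - 1)) := by
  have hr : m - 1 ≠ 0 := sub_ne_zero.2 hm1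
  have hr' : m' - 1 ≠ 0 := sub_ne_zero.2 hm'1
  have hcont : ∀ (u : ℝ), u ≠ 0 → ContinuousOn
      (fun α : ℝ => ((1 - α) * s ^ u + α * t ^ u) ^ (1 / u)) (Set.Icc 0 1) := by
    intro u hu
    apply ContinuousOn.rpow_const
    · fun_prop
    · intro x hx
      left
      exact ne_of_gt (comb_pos (by linarith [hx.2]) hx.1 (by ring)
        (rpow_pos_of_pos hs u) (rpow_pos_of_pos ht u))
  have hint : ∀ (u : ℝ), u ≠ 0 → IntervalIntegrable
      (fun α : ℝ => ((1 - α) * s ^ u + α * t ^ u) ^ (1 / u)) MeasureTheory.volume 0 1 := by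
    intro u hu
    apply ContinuousOn.intervalIntegrable
    rw [Set.uIcc_of_le (by norm_num : (0:ℝ) ≤ 1)]
    exact hcont u hu
  apply intervalIntegral.integral_mono_on (by norm_num) (hint _ hr) (hint _ hr')
  intro α hα
  exact pow_mean_le (by linarith [hα.2]) hα.1 (by ring) hs ht hr hr' (by linarith)
end

section
/- For all 0 < m ≤ 2, a, b > 0: 1/θ̃(a,b) − 1/θ_m(a,b) ≤ ((b−a)²/(ab)) · 1/θ̃(a,b), where θ̃ is the harmonic mean and θ_m(a,b) = ∫₀¹ ((1-α)a^{m-1} + α b^{m-1})^{1/(m-1)} dα (interpreted as the logarithmic mean when m = 1). -/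
open Real

/-- The power-difference mean `θ_m`, given by its integral representation for `m ≠ 1`
and by the logarithmic mean (in integral form) for `m = 1`. -/
noncomputable def powerMean (m a b : ℝ) : ℝ :=
  if m = 1 then ∫ α in (0:ℝ)..1, a ^ (1 - α) * b ^ α
  else ∫ α in (0:ℝ)..1, ((1 - α) * a ^ (m - 1) + α * b ^ (m - 1)) ^ (1 / (m - 1))

lemma convex_comb_pos {x y α : ℝ} (hx : 0 < x) (hy : 0 < y) (h0 : 0 ≤ α) (h1 : α ≤ 1) :
    0 < (1 - α) * x + α * y := by
  rcases eq_or_lt_of_le h1 with rfl | h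
  · simpa using hy
  · nlinarith [mul_pos (by linarith : (0:ℝ) < 1 - α) hx, mul_nonneg h0 hy.le]

/-- Bernoulli's inequality for exponents in `[-1, 0)`. -/
lemma bernoulli_neg {u q : ℝ} (hu : 0 < u) (hq1 : -1 ≤ q) (hq0 : q < 0) :
    1 + q * (u - 1) ≤ u ^ q := by
  have hup : 0 < u ^ (-q) := Real.rpow_pos_of_pos hu _
  have h1 : u ^ (-q) ≤ 1 + (-q) * (u - 1) := by
    have h := rpow_one_add_le_one_add_mul_self (s := u - 1) (by linarith) (p := -q)
      (by linarith) (by linarith)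
    rwa [show (1:ℝ) + (u - 1) = u by ring] at h
  have ht : 0 < 1 + (-q) * (u - 1) := lt_of_lt_of_le hup h1
  have h2 : (1 + (-q) * (u - 1))⁻¹ ≤ u ^ q := by
    rw [show u ^ q = (u ^ (-q))⁻¹ by rw [← Real.rpow_neg hu.le, neg_neg]]
    exact inv_anti₀ hup h1
  refine le_trans ?_ h2
  have h3 := mul_inv_cancel₀ ht.ne'
  nlinarith [sq_nonneg ((-q) * (u - 1)), inv_nonneg.mpr ht.le]

/-- Tangent line inequality for `x ↦ x ^ q`, `q ∈ [-1, 0)` (convexity). -/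
lemma tangent_neg {x N q : ℝ} (hx : 0 < x) (hN : 0 < N) (hq1 : -1 ≤ q) (hq0 : q < 0) :
    N ^ q + q * N ^ (q - 1) * (x - N) ≤ x ^ q := by
  have hb := bernoulli_neg (u := x / N) (div_pos hx hN) hq1 hq0
  have hNq : 0 < N ^ q := Real.rpow_pos_of_pos hN _
  have h2 : N ^ q * (1 + q * (x / N - 1)) ≤ x ^ q := by
    calc N ^ q * (1 + q * (x / N - 1)) ≤ N ^ q * (x / N) ^ q :=
          mul_le_mul_of_nonneg_left hb hNq.le
      _ = x ^ q := by
          rw [Real.div_rpow hx.le hN.le]; field_simp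
  calc N ^ q + q * N ^ (q - 1) * (x - N) = N ^ q * (1 + q * (x / N - 1)) := by
        rw [Real.rpow_sub hN, Real.rpow_one]; field_simp
    _ ≤ x ^ q := h2

/-- Pointwise power-mean ≤ arithmetic-mean, negative exponent case. -/
lemma pointwise_neg {a b q α : ℝ} (ha : 0 < a) (hb : 0 < b) (hq1 : -1 ≤ q) (hq0 : q < 0)
    (hα0 : 0 ≤ α) (hα1 : α ≤ 1) :
    ((1 - α) * a ^ q + α * b ^ q) ^ (1 / q) ≤ (1 - α) * a + α * b := by
  have haq := Real.rpow_pos_of_pos ha q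
  have hbq := Real.rpow_pos_of_pos hb q
  have hN : 0 < (1 - α) * a + α * b := convex_comb_pos ha hb hα0 hα1
  have hkey : ((1 - α) * a + α * b) ^ q ≤ (1 - α) * a ^ q + α * b ^ q := by
    have t1 := tangent_neg ha hN hq1 hq0
    have t2 := tangent_neg hb hN hq1 hq0
    have e : (1 - α) * (((1 - α) * a + α * b) ^ q
          + q * ((1 - α) * a + α * b) ^ (q - 1) * (a - ((1 - α) * a + α * b)))
        + α * (((1 - α) * a + α * b) ^ q
          + q * ((1 - α) * a + α * b) ^ (q - 1) * (b - ((1 - α) * a + α * b)))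
        = ((1 - α) * a + α * b) ^ q := by ring
    nlinarith [mul_le_mul_of_nonneg_left t1 (by linarith : (0:ℝ) ≤ 1 - α),
      mul_le_mul_of_nonneg_left t2 hα0]
  have h4 := Real.rpow_le_rpow_of_nonpos (Real.rpow_pos_of_pos hN q) hkey
    (le_of_lt (div_neg_of_pos_of_neg one_pos hq0))
  rwa [← Real.rpow_mul hN.le, mul_one_div, div_self hq0.ne, Real.rpow_one] at h4

/-- Pointwise power-mean ≤ arithmetic-mean, exponent in `(0, 1]`. -/
lemma pointwise_pos {a b q α : ℝ} (ha : 0 < a) (hb : 0 < b) (hq0 : 0 < q) (hq1 : q ≤ 1)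
    (hα0 : 0 ≤ α) (hα1 : α ≤ 1) :
    ((1 - α) * a ^ q + α * b ^ q) ^ (1 / q) ≤ (1 - α) * a + α * b := by
  have haq := Real.rpow_pos_of_pos ha q
  have hbq := Real.rpow_pos_of_pos hb q
  have hN : 0 < (1 - α) * a + α * b := convex_comb_pos ha hb hα0 hα1
  have hcon := (Real.concaveOn_rpow hq0.le hq1).2 (Set.mem_Ici.mpr ha.le)
    (Set.mem_Ici.mpr hb.le) (by linarith : (0:ℝ) ≤ 1 - α) hα0 (by ring)
  simp only [smul_eq_mul] at hcon
  have hS : 0 ≤ (1 - α) * a ^ q + α * b ^ q := (convex_comb_pos haq hbq hα0 hα1).le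
  have h4 := Real.rpow_le_rpow hS hcon (by positivity : (0:ℝ) ≤ 1 / q)
  rwa [← Real.rpow_mul hN.le, mul_one_div, div_self hq0.ne', Real.rpow_one] at h4

lemma integral_linear (a b : ℝ) : (∫ α in (0:ℝ)..1, ((1 - α) * a + α * b)) = (a + b) / 2 := by
  have h : (fun α : ℝ => (1 - α) * a + α * b) = fun α => a + (b - a) * α := by
    funext α; ring
  rw [h]
  rw [intervalIntegral.integral_add (f := fun _ => a) (g := fun α : ℝ => (b - a) * α)
    intervalIntegrable_const
    ((continuous_const.mul continuous_id').intervalIntegrable 0 1),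
    intervalIntegral.integral_const_mul, integral_id]
  simp
  ring

theorem harmonic_powerMean_comparison
    (m : ℝ) (hm0 : 0 < m) (hm2 : m ≤ 2) (a b : ℝ) (ha : 0 < a) (hb : 0 < b) :
    1 / (2 * a * b / (a + b)) - 1 / powerMean m a b ≤
      ((b - a) ^ 2 / (a * b)) * (1 / (2 * a * b / (a + b))) := by
  have hg_cont : Continuous fun α : ℝ => (1 - α) * a + α * b := by continuity
  have hg_int : IntervalIntegrable (fun α : ℝ => (1 - α) * a + α * b)
      MeasureTheory.volume 0 1 := hg_cont.intervalIntegrable 0 1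
  -- key bounds on powerMean
  have hbounds : 0 < powerMean m a b ∧ powerMean m a b ≤ (a + b) / 2 := by
    by_cases hm1 : m = 1
    · rw [powerMean, if_pos hm1]
      have hf_cont : Continuous fun α : ℝ => a ^ (1 - α) * b ^ α := by
        have e : (fun α : ℝ => a ^ (1 - α) * b ^ α)
            = fun α => Real.exp (Real.log a * (1 - α)) * Real.exp (Real.log b * α) := by
          funext α; rw [Real.rpow_def_of_pos ha, Real.rpow_def_of_pos hb]
        rw [e]
        exact (Real.continuous_exp.comp (by continuity)).mul
          (Real.continuous_exp.comp (by continuity))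
      have hf_int : IntervalIntegrable (fun α : ℝ => a ^ (1 - α) * b ^ α)
          MeasureTheory.volume 0 1 := hf_cont.intervalIntegrable 0 1
      constructor
      · exact intervalIntegral.intervalIntegral_pos_of_pos hf_int
          (fun x => mul_pos (Real.rpow_pos_of_pos ha _) (Real.rpow_pos_of_pos hb _)) one_pos
      · rw [← integral_linear a b]
        refine intervalIntegral.integral_mono_on zero_le_one hf_int hg_int fun x hx => ?_
        exact Real.geom_mean_le_arith_mean2_weighted (by linarith [hx.2]) hx.1 ha.le hb.le
          (by ring)
    · rw [powerMean, if_neg hm1]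
      set q := m - 1 with hq
      have hq0 : q ≠ 0 := sub_ne_zero.mpr hm1
      have hq1 : -1 < q := by simp [hq]; linarith
      have hq2 : q ≤ 1 := by simp [hq]; linarith
      have haq := Real.rpow_pos_of_pos ha q
      have hbq := Real.rpow_pos_of_pos hb q
      have hf_cont : ContinuousOn (fun α : ℝ => ((1 - α) * a ^ q + α * b ^ q) ^ (1 / q))
          (Set.Icc 0 1) := by
        refine ContinuousOn.rpow_const (Continuous.continuousOn (by continuity)) fun x hx => ?_
        exact Or.inl (convex_comb_pos haq hbq hx.1 hx.2).ne'
      have hf_int : IntervalIntegrable (fun α : ℝ => ((1 - α) * a ^ q + α * b ^ q) ^ (1 / q))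
          MeasureTheory.volume 0 1 := by
        apply ContinuousOn.intervalIntegrable
        rwa [Set.uIcc_of_le (by norm_num : (0:ℝ) ≤ 1)]
      constructor
      · refine intervalIntegral.intervalIntegral_pos_of_pos_on hf_int (fun x hx => ?_) one_pos
        exact Real.rpow_pos_of_pos (convex_comb_pos haq hbq hx.1.le hx.2.le) _
      · rw [← integral_linear a b]
        refine intervalIntegral.integral_mono_on zero_le_one hf_int hg_int fun x hx => ?_
        rcases lt_or_gt_of_ne hq0 with h | h
        · exact pointwise_neg ha hb hq1.le h hx.1 hx.2
        · exact pointwise_pos ha hb h hq2 hx.1 hx.2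
  obtain ⟨hθpos, hθle⟩ := hbounds
  have h1 : 2 / (a + b) ≤ 1 / powerMean m a b := by
    have := one_div_le_one_div_of_le hθpos hθle
    rwa [one_div_div] at this
  have key : (a + b) / (2 * a * b) - 2 / (a + b)
      ≤ (b - a) ^ 2 / (a * b) * ((a + b) / (2 * a * b)) := by
    rw [div_mul_div_comm, div_sub_div _ _ (by positivity) (by positivity),
      div_le_div_iff₀ (by positivity) (by positivity)]
    nlinarith [mul_nonneg (mul_nonneg (sq_nonneg (b - a)) (mul_pos ha hb).le)
      (by positivity : (0:ℝ) ≤ a ^ 2 + a * b + b ^ 2)]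
  rw [one_div_div]
  linarith
end
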